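/- Let B₁ and B₂ be Banach spaces and let f : B₁ → B₂ be twice continuously Fréchet differentiable with ‖f′(x)‖ ≤ M₁ and ‖f″(x)‖ ≤ M₂ for all x ∈ B₁. Then for all x₁, x₂, y₁, y₂ ∈ B₁, ‖f(y₂) − f(y₁) − f(x₂) + f(x₁)‖ ≤ M₁ ‖y₂ − y₁ − x₂ + x₁‖ + M₂ (‖y₁ − x₁‖ + ‖y₂ − x₂‖) ‖x₂ − x₁‖. -/

import Mathlib

open Set MeasureTheory Filter

theorem four_point_estimate_C2
    {B₁ B₂ : Type*} [NormedAddCommGroup B₁] [NormedSpace ℝ B₁]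
    [NormedAddCommGroup B₂] [NormedSpace ℝ B₂]
    (f : B₁ → B₂) (hf : ContDiff ℝ 2 f)
    (M₁ M₂ : ℝ)
    (hM₁ : ∀ x : B₁, ‖fderiv ℝ f x‖ ≤ M₁)
    (hM₂ : ∀ x : B₁, ‖fderiv ℝ (fderiv ℝ f) x‖ ≤ M₂)
    (x₁ x₂ y₁ y₂ : B₁) :
    ‖f y₂ - f y₁ - f x₂ + f x₁‖ ≤
      M₁ * ‖y₂ - y₁ - x₂ + x₁‖ + M₂ * (‖y₁ - x₁‖ + ‖y₂ - x₂‖) * ‖x₂ - x₁‖ := by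
  have hdf : Differentiable ℝ f := hf.differentiable (by norm_num)
  have hdf' : Differentiable ℝ (fderiv ℝ f) :=
    (hf.fderiv_right (m := 1) (by norm_num)).differentiable (by norm_num)
  set v := x₂ - x₁ with hv
  set w := y₂ - y₁ with hw
  set φ : ℝ → B₂ := fun t => f (y₁ + t • w) - f (x₁ + t • v) with hφ
  set φ' : ℝ → B₂ := fun t => fderiv ℝ f (y₁ + t • w) w - fderiv ℝ f (x₁ + t • v) v with hφ'
  have hder : ∀ t : ℝ, HasDerivAt φ (φ' t) t := by
    intro t
    have h1 : HasDerivAt (fun t : ℝ => f (y₁ + t • w)) (fderiv ℝ f (y₁ + t • w) w) t := by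
      have hc : HasDerivAt (fun t : ℝ => y₁ + t • w) w t := by
        simpa using ((hasDerivAt_id t).smul_const w).const_add y₁
      exact ((hdf _).hasFDerivAt.comp_hasDerivAt t hc)
    have h2 : HasDerivAt (fun t : ℝ => f (x₁ + t • v)) (fderiv ℝ f (x₁ + t • v) v) t := by
      have hc : HasDerivAt (fun t : ℝ => x₁ + t • v) v t := by
        simpa using ((hasDerivAt_id t).smul_const v).const_add x₁
      exact ((hdf _).hasFDerivAt.comp_hasDerivAt t hc)
    exact h1.sub h2
  have hlip : ∀ a b : B₁, ‖fderiv ℝ f a - fderiv ℝ f b‖ ≤ M₂ * ‖a - b‖ := by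
    intro a b
    exact (convex_univ).norm_image_sub_le_of_norm_fderiv_le
      (fun x _ => hdf' x) (fun x _ => hM₂ x) trivial trivial
  have bound : ∀ t ∈ Ico (0 : ℝ) 1,
      ‖φ' t‖ ≤ M₁ * ‖w - v‖ + M₂ * (‖y₁ - x₁‖ + ‖y₂ - x₂‖) * ‖v‖ := by
    intro t ht
    have key : φ' t = fderiv ℝ f (y₁ + t • w) (w - v)
        + (fderiv ℝ f (y₁ + t • w) - fderiv ℝ f (x₁ + t • v)) v := by
      simp [φ', map_sub]
    rw [key]
    have h1 : ‖fderiv ℝ f (y₁ + t • w) (w - v)‖ ≤ M₁ * ‖w - v‖ :=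
      le_trans ((fderiv ℝ f (y₁ + t • w)).le_opNorm _)
        (mul_le_mul_of_nonneg_right (hM₁ _) (norm_nonneg _))
    have h2 : ‖(fderiv ℝ f (y₁ + t • w) - fderiv ℝ f (x₁ + t • v)) v‖ ≤
        M₂ * (‖y₁ - x₁‖ + ‖y₂ - x₂‖) * ‖v‖ := by
      refine le_trans ((fderiv ℝ f (y₁ + t • w) - fderiv ℝ f (x₁ + t • v)).le_opNorm v) ?_
      refine mul_le_mul_of_nonneg_right ?_ (norm_nonneg _)
      refine le_trans (hlip _ _) ?_
      have hM₂0 : 0 ≤ M₂ := le_trans (ContinuousLinearMap.opNorm_nonneg _) (hM₂ 0)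
      refine mul_le_mul_of_nonneg_left ?_ hM₂0
      have heq : (y₁ + t • w) - (x₁ + t • v) = (1 - t) • (y₁ - x₁) + t • (y₂ - x₂) := by
        simp [hw, hv, sub_smul, one_smul, smul_sub]; abel
      rw [heq]
      calc ‖(1 - t) • (y₁ - x₁) + t • (y₂ - x₂)‖
          ≤ ‖(1 - t) • (y₁ - x₁)‖ + ‖t • (y₂ - x₂)‖ := norm_add_le _ _
        _ = |1 - t| * ‖y₁ - x₁‖ + |t| * ‖y₂ - x₂‖ := by rw [norm_smul, norm_smul]; simp
        _ ≤ 1 * ‖y₁ - x₁‖ + 1 * ‖y₂ - x₂‖ := by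
            gcongr
            · rw [abs_le]; constructor <;> [linarith [ht.2]; linarith [ht.1]]
            · rw [abs_le]; constructor <;> [linarith [ht.1]; linarith [ht.2]]
        _ = ‖y₁ - x₁‖ + ‖y₂ - x₂‖ := by ring
    calc ‖_ + _‖ ≤ _ + _ := norm_add_le _ _
      _ ≤ _ := add_le_add h1 h2
  have main : ‖φ 1 - φ 0‖ ≤ M₁ * ‖w - v‖ + M₂ * (‖y₁ - x₁‖ + ‖y₂ - x₂‖) * ‖v‖ :=
    norm_image_sub_le_of_norm_deriv_le_segment_01'
      (fun t _ => (hder t).hasDerivWithinAt) bound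
  have hφ1 : φ 1 - φ 0 = f y₂ - f y₁ - f x₂ + f x₁ := by
    simp [φ, hw, hv]; abel
  have hwv : w - v = y₂ - y₁ - x₂ + x₁ := by simp [hw, hv]; abel
  rw [hφ1, hwv] at main
  simpa [hv] using main
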